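/- (Theorem 3.3(ii); full high-energy expansion of the scattering amplitude, d=2.) For every M ∈ ℕ there exist constants C > 0 and κ₀ > 1 such that for all κ ≥ κ₀ the matrix A(κ) is invertible and for all k, ℓ ∈ ℝ² with |k| = |ℓ| = κ one has |f(k,ℓ) + (2π ln κ)^{−1} Σ_{m=0}^M (−2π)^m (ln κ)^{−m} Σ_{j=1}^n (α_j − i/4)^m e^{i(k−ℓ)·y_j}| ≤ C (ln κ)^{−M−2}. -/

import Mathlib

set_option maxHeartbeats 1600000
open Complex Finset Matrix

noncomputable section

/-- The matrix `A(κ) = (ln κ/(2π)) I + Z + G(κ)` for a two-dimensional multipoint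
potential, where `Z = diag(α_j - i/4)`. -/
def A2 (n : ℕ) (α : Fin n → ℂ) (G : ℝ → Matrix (Fin n) (Fin n) ℂ) (κ : ℝ) :
    Matrix (Fin n) (Fin n) ℂ :=
  ((Real.log κ / (2 * Real.pi) : ℝ) : ℂ) • (1 : Matrix (Fin n) (Fin n) ℂ) +
    Matrix.diagonal (fun j => α j - Complex.I / 4) + G κ

/-- `q(k) = A(κ)⁻¹ b(k)` with `b(k)_j = -e^{i k·y_j}`. -/
def q2 (n : ℕ) (y : Fin n → EuclideanSpace ℝ (Fin 2)) (α : Fin n → ℂ)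
    (G : ℝ → Matrix (Fin n) (Fin n) ℂ) (κ : ℝ) (k : EuclideanSpace ℝ (Fin 2)) :
    Fin n → ℂ :=
  (A2 n α G κ)⁻¹ *ᵥ fun j => -Complex.exp (Complex.I * (inner ℝ k (y j) : ℝ))

/-- The scattering amplitude `f(k,ℓ) = (2π)⁻² Σ_j q_j(k) e^{-iℓ·y_j}`. -/
def f2 (n : ℕ) (y : Fin n → EuclideanSpace ℝ (Fin 2)) (α : Fin n → ℂ)
    (G : ℝ → Matrix (Fin n) (Fin n) ℂ) (κ : ℝ) (k ℓ : EuclideanSpace ℝ (Fin 2)) : ℂ :=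
  ((2 * Real.pi : ℂ) ^ 2)⁻¹ *
    ∑ j, q2 n y α G κ k j * Complex.exp (-Complex.I * (inner ℝ ℓ (y j) : ℝ))

attribute [local instance] Matrix.linftyOpNormedRing Matrix.linftyOpNormedAlgebra

namespace Stmt4Aux

variable {n : ℕ}

lemma entry_le (A : Matrix (Fin n) (Fin n) ℂ) (i j : Fin n) : ‖A i j‖ ≤ ‖A‖ := by
  rw [Matrix.linfty_opNorm_def]
  have h1 : ‖A i j‖₊ ≤ ∑ j', ‖A i j'‖₊ :=
    Finset.single_le_sum (f := fun j' => ‖A i j'‖₊) (fun _ _ => by simp) (Finset.mem_univ j)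
  have h2 : (∑ j', ‖A i j'‖₊) ≤ Finset.univ.sup fun i => ∑ j', ‖A i j'‖₊ :=
    Finset.le_sup (f := fun i => ∑ j', ‖A i j'‖₊) (Finset.mem_univ i)
  exact_mod_cast h1.trans h2

lemma norm_le_of_rows (A : Matrix (Fin n) (Fin n) ℂ) {r : ℝ} (hr : 0 ≤ r)
    (h : ∀ i, ∑ j, ‖A i j‖ ≤ r) : ‖A‖ ≤ r := by
  rw [Matrix.linfty_opNorm_def]
  have : (Finset.univ.sup fun i => ∑ j', ‖A i j'‖₊) ≤ ⟨r, hr⟩ := by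
    refine Finset.sup_le fun i _ => ?_
    have := h i
    have h' : ((∑ j', ‖A i j'‖₊ : NNReal) : ℝ) ≤ r := by simpa [NNReal.coe_sum] using this
    exact NNReal.coe_le_coe.mp h'
  exact_mod_cast this

lemma norm_exp_I_mul (r : ℝ) : ‖Complex.exp (Complex.I * r)‖ = 1 := by
  rw [Complex.norm_exp]
  simp

lemma norm_exp_neg_I_mul (r : ℝ) : ‖Complex.exp (-Complex.I * r)‖ = 1 := by
  rw [Complex.norm_exp]
  simp

variable {R : Type*} [NormedRing R]

lemma norm_pow_le_gen (h1 : ‖(1 : R)‖ ≤ 1) (x : R) {s : ℝ} (hs : ‖x‖ ≤ s) (h1s : 1 ≤ s) :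
    ∀ m : ℕ, ‖x ^ m‖ ≤ s ^ m := by
  intro m
  induction m with
  | zero => simpa using h1
  | succ m ih =>
      rw [pow_succ, pow_succ]
      calc ‖x ^ m * x‖ ≤ ‖x ^ m‖ * ‖x‖ := norm_mul_le _ _
        _ ≤ s ^ m * s := by
            apply mul_le_mul ih hs (norm_nonneg _)
            exact pow_nonneg (le_trans zero_le_one h1s) m

lemma pow_sub_pow_norm_le (h1 : ‖(1 : R)‖ ≤ 1) (a b : R) {s : ℝ}
    (hs : ‖a‖ + ‖b‖ + 1 ≤ s) : ∀ m : ℕ, ‖(a + b) ^ m - a ^ m‖ ≤ m * s ^ m * ‖b‖ := by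
  have hbn : (0:ℝ) ≤ ‖b‖ := norm_nonneg b
  have han : (0:ℝ) ≤ ‖a‖ := norm_nonneg a
  have h1s : (1:ℝ) ≤ s := by linarith
  have hsa : ‖a‖ ≤ s := by linarith
  have hsab : ‖a + b‖ ≤ s := le_trans (norm_add_le a b) (by linarith)
  have hs0 : (0:ℝ) ≤ s := by linarith
  intro m
  induction m with
  | zero => simp
  | succ m ih =>
      have hdecomp : (a + b) ^ (m + 1) - a ^ (m + 1) =
          ((a + b) ^ m - a ^ m) * a + (a + b) ^ m * b := by
        rw [pow_succ, pow_succ, sub_mul, mul_add]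
        abel
      rw [hdecomp]
      have hp : ‖(a + b) ^ m‖ ≤ s ^ m := norm_pow_le_gen h1 _ hsab h1s m
      calc ‖((a + b) ^ m - a ^ m) * a + (a + b) ^ m * b‖
          ≤ ‖((a + b) ^ m - a ^ m) * a‖ + ‖(a + b) ^ m * b‖ := norm_add_le _ _
        _ ≤ ‖(a + b) ^ m - a ^ m‖ * ‖a‖ + ‖(a + b) ^ m‖ * ‖b‖ :=
            add_le_add (norm_mul_le _ _) (norm_mul_le _ _)
        _ ≤ (m * s ^ m * ‖b‖) * s + s ^ m * ‖b‖ := by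
            refine add_le_add ?_ (mul_le_mul_of_nonneg_right hp hbn)
            refine mul_le_mul ih hsa han ?_
            positivity
        _ ≤ ((m : ℝ) + 1) * s ^ (m + 1) * ‖b‖ := by
            have h0 : (0:ℝ) ≤ s ^ m := pow_nonneg hs0 m
            rw [pow_succ]
            nlinarith [mul_nonneg (mul_nonneg (sub_nonneg.mpr h1s) h0) hbn]
        _ = ((m + 1 : ℕ) : ℝ) * s ^ (m + 1) * ‖b‖ := by push_cast; ring
  
end Stmt4Aux


open Stmt4Aux Filter in
/-- Theorem 3.3(ii): full high-energy expansion of the scattering amplitude, d = 2. -/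
theorem stmt4 (n : ℕ) (y : Fin n → EuclideanSpace ℝ (Fin 2)) (α : Fin n → ℂ)
    (hy : Function.Injective y)
    (G : ℝ → Matrix (Fin n) (Fin n) ℂ)
    (hGdiag : ∀ κ : ℝ, 1 ≤ κ → ∀ j, G κ j j = 0)
    (c : ℝ) (hc : 0 < c)
    (hG : ∀ κ : ℝ, 1 ≤ κ → ∀ j j' : Fin n, j ≠ j' → ‖G κ j j'‖ ≤ c / Real.sqrt κ) (M : ℕ) :
    ∃ C > (0 : ℝ), ∃ κ₀ > (1 : ℝ), ∀ κ ≥ κ₀, IsUnit (A2 n α G κ) ∧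
      ∀ k ℓ : EuclideanSpace ℝ (Fin 2), ‖k‖ = κ → ‖ℓ‖ = κ →
        ‖f2 n y α G κ k ℓ +
            ((2 * Real.pi * Real.log κ : ℝ) : ℂ)⁻¹ *
              ∑ m ∈ Finset.range (M + 1),
                (-2 * Real.pi : ℂ) ^ m / (Real.log κ : ℂ) ^ m *
                  ∑ j, (α j - Complex.I / 4) ^ m *
                    Complex.exp (Complex.I * (inner ℝ (k - ℓ) (y j) : ℝ))‖ ≤
          C / (Real.log κ) ^ (M + 2) := by
  classical
  rcases Nat.eq_zero_or_pos n with hn | hn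
  · subst hn
    refine ⟨1, one_pos, 2, one_lt_two, fun κ hκ => ?_⟩
    have hκ1 : (1:ℝ) < κ := lt_of_lt_of_le one_lt_two hκ
    have hlog : 0 < Real.log κ := Real.log_pos hκ1
    refine ⟨isUnit_of_subsingleton _, fun k ℓ hk hℓ => ?_⟩
    have h0 : f2 0 y α G κ k ℓ = 0 := by simp [f2]
    rw [h0]
    simp only [Finset.univ_eq_empty, Finset.sum_empty, mul_zero, Finset.sum_const_zero,
      zero_add, norm_zero]
    positivity
  haveI : Nonempty (Fin n) := Fin.pos_iff_nonempty.mp hn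
  haveI : CompleteSpace (Matrix (Fin n) (Fin n) ℂ) := FiniteDimensional.complete ℂ _
  have hπ : (0:ℝ) < Real.pi := Real.pi_pos
  set z : Fin n → ℂ := fun j => α j - Complex.I / 4 with hz
  set Zd : Matrix (Fin n) (Fin n) ℂ := Matrix.diagonal z with hZd
  set R₀ : ℝ := (∑ j, ‖z j‖) + n * c + 1 with hR₀
  have hzn : (0:ℝ) ≤ ∑ j, ‖z j‖ := Finset.sum_nonneg fun _ _ => norm_nonneg _
  have hnc : (0:ℝ) ≤ (n:ℝ) * c := by positivity
  have hR₀1 : (1:ℝ) ≤ R₀ := by rw [hR₀]; linarith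
  have hR₀0 : (0:ℝ) < R₀ := by linarith
  have hZnorm : ‖Zd‖ ≤ ∑ j, ‖z j‖ := by
    rw [hZd, Matrix.linfty_opNorm_diagonal]
    refine (pi_norm_le_iff_of_nonneg hzn).mpr fun i => ?_
    exact Finset.single_le_sum (f := fun j => ‖z j‖) (fun _ _ => norm_nonneg _)
      (Finset.mem_univ i)
  set C₁ : ℝ := ((M:ℝ)+1)^2 * ((n:ℝ) * c) with hC₁
  have hC₁0 : 0 < C₁ := by
    rw [hC₁]
    have : (0:ℝ) < (n:ℝ) * c := by positivity
    positivity
  set C₂ : ℝ := 2 * R₀ ^ (M+1) + 1 with hC₂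
  have hC₂0 : 0 < C₂ := by positivity
  set C : ℝ := ((2*Real.pi)^2)⁻¹ * (n:ℝ)^2 * C₂ * (2*Real.pi)^(M+2) + 1 with hC
  have hC0 : 0 < C := by positivity
  -- choose κ₀
  have hev1 : ∀ᶠ κ : ℝ in atTop, 2*Real.pi*(2*R₀) ≤ Real.log κ :=
    Real.tendsto_log_atTop.eventually_ge_atTop _
  have hev2 : ∀ᶠ κ : ℝ in atTop,
      C₁ * (Real.log κ)^(M+1) ≤ (2*Real.pi)^(M+1) * Real.sqrt κ := by
    have h := isLittleO_log_rpow_rpow_atTop ((M:ℝ)+1)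
      (by norm_num : (0:ℝ) < 1/2)
    have hε : (0:ℝ) < (2*Real.pi)^(M+1) / C₁ := by positivity
    filter_upwards [h.bound hε, Real.tendsto_log_atTop.eventually_ge_atTop 0,
      eventually_ge_atTop (0:ℝ)] with x hx hlog0 hx0
    have h1 : Real.log x ^ ((M:ℝ)+1) = (Real.log x)^(M+1) := by
      rw [show ((M:ℝ)+1) = ((M+1 : ℕ) : ℝ) by push_cast; ring, Real.rpow_natCast]
    have h2 : ‖Real.log x ^ ((M:ℝ)+1)‖ = (Real.log x)^(M+1) := by
      rw [h1, Real.norm_eq_abs, _root_.abs_of_nonneg (by positivity)]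
    have h3 : ‖x ^ ((1:ℝ)/2)‖ = Real.sqrt x := by
      rw [Real.norm_eq_abs, _root_.abs_of_nonneg (Real.rpow_nonneg hx0 _), Real.sqrt_eq_rpow]
    rw [h2, h3] at hx
    calc C₁ * (Real.log x)^(M+1) ≤ C₁ * ((2*Real.pi)^(M+1)/C₁ * Real.sqrt x) := by
          exact mul_le_mul_of_nonneg_left hx hC₁0.le
      _ = (2*Real.pi)^(M+1) * Real.sqrt x := by field_simp
  obtain ⟨a, ha⟩ := (hev1.and hev2).exists_forall_of_atTop
  refine ⟨C, hC0, max a 2, lt_of_lt_of_le one_lt_two (le_max_right a 2), fun κ hκ => ?_⟩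
  have hκ2 : (2:ℝ) ≤ κ := le_trans (le_max_right a 2) hκ
  have hκ1 : (1:ℝ) ≤ κ := by linarith
  have hκ0 : (0:ℝ) < κ := by linarith
  obtain ⟨hlogR, hgrow⟩ := ha κ (le_trans (le_max_left a 2) hκ)
  have hlogpos : 0 < Real.log κ := Real.log_pos (by linarith)
  set t : ℝ := Real.log κ / (2*Real.pi) with ht
  have htpos : 0 < t := by rw [ht]; positivity
  have ht2R : 2*R₀ ≤ t := by
    rw [ht, le_div_iff₀ (by positivity)]
    calc 2*R₀*(2*Real.pi) = 2*Real.pi*(2*R₀) := by ring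
      _ ≤ Real.log κ := hlogR
  have ht2 : (2:ℝ) ≤ t := le_trans (by linarith) ht2R
  set tc : ℂ := ((t:ℝ):ℂ) with htc
  have htc0 : tc ≠ 0 := by
    rw [htc]
    exact_mod_cast (ne_of_gt htpos)
  set W : Matrix (Fin n) (Fin n) ℂ := Zd + G κ with hW
  have hGnorm : ‖G κ‖ ≤ (n:ℝ) * c / Real.sqrt κ := by
    refine norm_le_of_rows _ (by positivity) fun i => ?_
    calc ∑ j, ‖G κ i j‖ ≤ ∑ _j : Fin n, c / Real.sqrt κ := by
          refine Finset.sum_le_sum fun j _ => ?_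
          rcases eq_or_ne i j with rfl | hij
          · rw [hGdiag κ hκ1 i, norm_zero]; positivity
          · exact hG κ hκ1 i j hij
      _ = (n:ℝ) * c / Real.sqrt κ := by
          rw [Finset.sum_const, Finset.card_univ, Fintype.card_fin, nsmul_eq_mul]
          ring
  have hsqrt1 : (1:ℝ) ≤ Real.sqrt κ := by
    rw [show (1:ℝ) = Real.sqrt 1 by simp]
    exact Real.sqrt_le_sqrt hκ1
  have hGnc : ‖G κ‖ ≤ (n:ℝ) * c := by
    refine le_trans hGnorm ?_
    rw [div_le_iff₀ (by linarith)]
    nlinarith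
  have hWnorm : ‖W‖ ≤ R₀ := by
    rw [hW, hR₀]
    calc ‖Zd + G κ‖ ≤ ‖Zd‖ + ‖G κ‖ := norm_add_le _ _
      _ ≤ (∑ j, ‖z j‖) + (n:ℝ)*c := add_le_add hZnorm hGnc
      _ ≤ (∑ j, ‖z j‖) + (n:ℝ)*c + 1 := by linarith
  set X : Matrix (Fin n) (Fin n) ℂ := tc⁻¹ • W with hX
  have htcnorm : ‖tc⁻¹‖ = t⁻¹ := by
    rw [htc, norm_inv, Complex.norm_real, Real.norm_eq_abs, _root_.abs_of_pos htpos]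
  have hXnorm : ‖X‖ ≤ R₀ / t := by
    rw [hX, norm_smul, htcnorm, div_eq_inv_mul]
    exact mul_le_mul_of_nonneg_left hWnorm (by positivity)
  have hXhalf : ‖X‖ ≤ 1/2 := by
    refine le_trans hXnorm ?_
    rw [div_le_div_iff₀ htpos (by norm_num)]
    linarith
  have hXlt : ‖-X‖ < 1 := by rw [norm_neg]; linarith
  have hone : ‖(1 : Matrix (Fin n) (Fin n) ℂ)‖ ≤ 1 := le_of_eq norm_one
  have hu : IsUnit ((1 : Matrix (Fin n) (Fin n) ℂ) + X) := by
    have := (Units.oneSub (-X) hXlt).isUnit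
    rwa [Units.val_oneSub, sub_neg_eq_add] at this
  set v : Matrix (Fin n) (Fin n) ℂ := Ring.inverse (1 + X) with hv
  have hvmul : ((1 : Matrix (Fin n) (Fin n) ℂ) + X) * v = 1 :=
    Ring.mul_inverse_cancel _ hu
  have hA : A2 n α G κ = tc • (1 + X) := by
    rw [A2, ← hz, ← hZd, ← ht, ← htc, smul_add, hX, smul_smul,
      mul_inv_cancel₀ htc0, one_smul, hW, add_assoc]
  set B : Matrix (Fin n) (Fin n) ℂ := tc⁻¹ • v with hB
  have hAB : A2 n α G κ * B = 1 := by
    rw [hA, hB, smul_mul_assoc, mul_smul_comm, smul_smul, mul_inv_cancel₀ htc0,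
      one_smul, hvmul]
  have hUnit : IsUnit (A2 n α G κ) :=
    isUnit_iff_exists.mpr ⟨B, hAB, mul_eq_one_comm.mp hAB⟩
  have hAinv : (A2 n α G κ)⁻¹ = B := Matrix.inv_eq_right_inv hAB
  refine ⟨hUnit, fun k ℓ hk hℓ => ?_⟩
  -- norm estimate of the error matrix
  have hv2 : ‖v‖ ≤ 2 := by
    have e1 := NormedRing.inverse_one_sub_nth_order' (R := Matrix (Fin n) (Fin n) ℂ) 1 hXlt
    rw [sub_neg_eq_add, ← hv] at e1
    simp only [Finset.range_one, Finset.sum_singleton, pow_zero, pow_one] at e1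
    have : ‖v‖ ≤ ‖(1 : Matrix (Fin n) (Fin n) ℂ)‖ + ‖X‖ * ‖v‖ := by
      calc ‖v‖ = ‖(1 : Matrix (Fin n) (Fin n) ℂ) + -X * v‖ := by rw [← e1]
        _ ≤ ‖(1 : Matrix (Fin n) (Fin n) ℂ)‖ + ‖-X * v‖ := norm_add_le _ _
        _ ≤ ‖(1 : Matrix (Fin n) (Fin n) ℂ)‖ + ‖X‖ * ‖v‖ := by
            have := norm_mul_le (-X) v
            rw [norm_neg] at this
            linarith
    have hXv : ‖X‖ * ‖v‖ ≤ (1/2) * ‖v‖ :=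
      mul_le_mul_of_nonneg_right hXhalf (norm_nonneg _)
    have hv0 := norm_nonneg v
    linarith
  set Q : Matrix (Fin n) (Fin n) ℂ := ∑ m ∈ Finset.range (M+1), (-X)^m with hQ
  have hvQ : v - Q = (-X)^(M+1) * v := by
    have e1 := NormedRing.inverse_one_sub_nth_order' (R := Matrix (Fin n) (Fin n) ℂ)
      (M+1) hXlt
    rw [sub_neg_eq_add, ← hv, ← hQ] at e1
    conv_lhs => rw [e1]
    rw [add_sub_cancel_left]
  have hvQnorm : ‖v - Q‖ ≤ 2 * (R₀/t)^(M+1) := by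
    rw [hvQ]
    have h1 : ‖(-X)^(M+1)‖ ≤ ‖X‖^(M+1) := by
      have := norm_pow_le' (-X) (Nat.succ_pos M)
      rwa [norm_neg] at this
    calc ‖(-X)^(M+1) * v‖ ≤ ‖(-X)^(M+1)‖ * ‖v‖ := norm_mul_le _ _
      _ ≤ ‖X‖^(M+1) * 2 := by
          refine mul_le_mul h1 hv2 (norm_nonneg _) (by positivity)
      _ ≤ (R₀/t)^(M+1) * 2 := by
          refine mul_le_mul_of_nonneg_right ?_ (by norm_num)
          exact pow_le_pow_left₀ (norm_nonneg _) hXnorm _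
      _ = 2 * (R₀/t)^(M+1) := by ring
  set P : Matrix (Fin n) (Fin n) ℂ := ∑ m ∈ Finset.range (M+1), (-tc⁻¹)^m • Zd^m with hP
  have hQP : ‖Q - P‖ ≤ C₁ / Real.sqrt κ := by
    rw [hQ, hP, ← Finset.sum_sub_distrib]
    have hterm : ∀ m ∈ Finset.range (M+1),
        ‖(-X)^m - (-tc⁻¹)^m • Zd^m‖ ≤ ((M:ℝ)+1) * ((n:ℝ)*c/Real.sqrt κ) := by
      intro m hm
      have hmle : m ≤ M := Nat.lt_succ_iff.mp (Finset.mem_range.mp hm)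
      have hXm : (-X)^m = (-tc⁻¹)^m • W^m := by
        rw [hX, ← neg_smul, smul_pow]
      rw [hXm, ← smul_sub, norm_smul, norm_pow, norm_neg, htcnorm]
      have hs : ‖Zd‖ + ‖G κ‖ + 1 ≤ R₀ := by
        rw [hR₀]
        have := add_le_add hZnorm hGnc
        linarith
      have hps := pow_sub_pow_norm_le hone Zd (G κ) hs m
      rw [← hW] at hps
      calc (t⁻¹)^m * ‖W^m - Zd^m‖ ≤ (t⁻¹)^m * ((m:ℝ) * R₀^m * ‖G κ‖) := by
            refine mul_le_mul_of_nonneg_left hps (by positivity)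
        _ = (m:ℝ) * (R₀/t)^m * ‖G κ‖ := by
            rw [div_pow, div_eq_inv_mul, inv_pow]
            ring
        _ ≤ ((M:ℝ)+1) * ((n:ℝ)*c/Real.sqrt κ) := by
            have hm1 : (m:ℝ) ≤ (M:ℝ)+1 := by
              have : (m:ℝ) ≤ (M:ℝ) := Nat.cast_le.mpr hmle
              linarith
            have hb0 : (0:ℝ) ≤ (R₀/t)^m := pow_nonneg (le_of_lt (div_pos hR₀0 htpos)) m
            have hg0 : (0:ℝ) ≤ ‖G κ‖ := norm_nonneg _
            have hpow1 : (R₀/t)^m ≤ 1 := by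
              refine pow_le_one₀ (le_of_lt (div_pos hR₀0 htpos)) ?_
              rw [div_le_one htpos]; linarith
            have hM0 : (0:ℝ) ≤ (M:ℝ)+1 := by positivity
            calc (m:ℝ)*(R₀/t)^m*‖G κ‖ = (m:ℝ)*((R₀/t)^m*‖G κ‖) := by ring
              _ ≤ ((M:ℝ)+1)*((R₀/t)^m*‖G κ‖) :=
                  mul_le_mul_of_nonneg_right hm1 (mul_nonneg hb0 hg0)
              _ ≤ ((M:ℝ)+1)*(1*‖G κ‖) :=
                  mul_le_mul_of_nonneg_left (mul_le_mul_of_nonneg_right hpow1 hg0) hM0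
              _ = ((M:ℝ)+1)*‖G κ‖ := by ring
              _ ≤ ((M:ℝ)+1)*((n:ℝ)*c/Real.sqrt κ) :=
                  mul_le_mul_of_nonneg_left hGnorm hM0
    calc ‖∑ m ∈ Finset.range (M+1), ((-X)^m - (-tc⁻¹)^m • Zd^m)‖
        ≤ ∑ m ∈ Finset.range (M+1), ‖(-X)^m - (-tc⁻¹)^m • Zd^m‖ := norm_sum_le _ _
      _ ≤ ∑ _m ∈ Finset.range (M+1), ((M:ℝ)+1) * ((n:ℝ)*c/Real.sqrt κ) :=
          Finset.sum_le_sum hterm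
      _ = ((M:ℝ)+1)^2 * ((n:ℝ)*c) / Real.sqrt κ := by
          rw [Finset.sum_const, Finset.card_range, nsmul_eq_mul]
          push_cast
          ring
      _ = C₁ / Real.sqrt κ := by rw [hC₁]
  have hsκ : C₁ / Real.sqrt κ ≤ (1/t)^(M+1) := by
    have htp : (0:ℝ) < t^(M+1) := pow_pos htpos _
    have hsq : (0:ℝ) < Real.sqrt κ := Real.sqrt_pos.mpr hκ0
    have h1 : C₁ * t^(M+1) ≤ Real.sqrt κ := by
      rw [ht, div_pow, ← mul_div_assoc, div_le_iff₀ (by positivity)]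
      calc C₁ * Real.log κ ^ (M+1) ≤ (2*Real.pi)^(M+1) * Real.sqrt κ := hgrow
        _ = Real.sqrt κ * (2*Real.pi)^(M+1) := by ring
    rw [one_div, inv_pow, ← one_div, div_le_div_iff₀ hsq htp]
    linarith
  have hD : ‖B - tc⁻¹ • P‖ ≤ C₂ * (1/t)^(M+2) := by
    rw [hB, ← smul_sub, norm_smul, htcnorm]
    have h1 : ‖v - P‖ ≤ ‖v - Q‖ + ‖Q - P‖ := by
      calc ‖v - P‖ = ‖(v - Q) + (Q - P)‖ := by congr 1; abel
        _ ≤ ‖v - Q‖ + ‖Q - P‖ := norm_add_le _ _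
    calc t⁻¹ * ‖v - P‖ ≤ t⁻¹ * (2*(R₀/t)^(M+1) + C₁/Real.sqrt κ) := by
          refine mul_le_mul_of_nonneg_left (le_trans h1 (add_le_add hvQnorm hQP))
            (by positivity)
      _ ≤ t⁻¹ * (2*R₀^(M+1)*(1/t)^(M+1) + (1/t)^(M+1)) := by
          refine mul_le_mul_of_nonneg_left (add_le_add ?_ hsκ) (by positivity)
          refine le_of_eq ?_
          rw [div_pow, one_div, inv_pow]
          ring
      _ = C₂ * (1/t)^(M+2) := by
          rw [hC₂, one_div, pow_succ]
          ring
  -- phases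
  have hexp : ∀ j, Complex.exp (Complex.I * ((inner ℝ (k - ℓ) (y j) : ℝ) : ℂ)) =
      Complex.exp (Complex.I * ((inner ℝ k (y j) : ℝ) : ℂ)) *
      Complex.exp (-Complex.I * ((inner ℝ ℓ (y j) : ℝ) : ℂ)) := by
    intro j
    have hi : (inner ℝ (k - ℓ) (y j) : ℝ) = (inner ℝ k (y j) : ℝ) - (inner ℝ ℓ (y j) : ℝ) :=
      inner_sub_left _ _ _
    rw [hi]
    push_cast
    rw [mul_sub, sub_eq_add_neg, ← neg_mul, Complex.exp_add]
  have hf2 : f2 n y α G κ k ℓ = -((2 * Real.pi : ℂ) ^ 2)⁻¹ *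
      ∑ j, ∑ j', B j j' *
        (Complex.exp (Complex.I * ((inner ℝ k (y j') : ℝ) : ℂ)) *
         Complex.exp (-Complex.I * ((inner ℝ ℓ (y j) : ℝ) : ℂ))) := by
    rw [f2]
    simp only [q2, hAinv, Matrix.mulVec, dotProduct]
    have hrow : ∀ j : Fin n,
        (∑ j', B j j' * -Complex.exp (Complex.I * ((inner ℝ k (y j') : ℝ) : ℂ))) *
          Complex.exp (-Complex.I * ((inner ℝ ℓ (y j) : ℝ) : ℂ))
        = -∑ j', B j j' *
            (Complex.exp (Complex.I * ((inner ℝ k (y j') : ℝ) : ℂ)) *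
             Complex.exp (-Complex.I * ((inner ℝ ℓ (y j) : ℝ) : ℂ))) := by
      intro j
      rw [Finset.sum_mul, ← Finset.sum_neg_distrib]
      refine Finset.sum_congr rfl fun j' _ => by ring
    simp only [hrow]
    rw [Finset.sum_neg_distrib]
    ring
  have hlogC : (Real.log κ : ℂ) ≠ 0 := by
    exact_mod_cast ne_of_gt hlogpos
  have hπC : (Real.pi : ℂ) ≠ 0 := by exact_mod_cast Real.pi_ne_zero
  have htcval : tc = (Real.log κ : ℂ) / (2 * (Real.pi : ℂ)) := by
    rw [htc, ht]; push_cast; ring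
  have hcoef : ∀ m : ℕ, (((2 * Real.pi * Real.log κ : ℝ) : ℂ))⁻¹ *
      ((-2 * Real.pi : ℂ) ^ m / (Real.log κ : ℂ) ^ m)
      = ((2 * Real.pi : ℂ) ^ 2)⁻¹ * (tc⁻¹ * (-tc⁻¹) ^ m) := by
    intro m
    rw [htcval, inv_div]
    have hnegpow : (-(2 * (Real.pi : ℂ) / (Real.log κ : ℂ))) ^ m
        = (-2 * Real.pi : ℂ) ^ m / (Real.log κ : ℂ) ^ m := by
      rw [← neg_div, div_pow]
      norm_num
    rw [hnegpow]
    push_cast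
    field_simp
  have hS : (((2 * Real.pi * Real.log κ : ℝ) : ℂ))⁻¹ *
      ∑ m ∈ Finset.range (M + 1),
        (-2 * Real.pi : ℂ) ^ m / (Real.log κ : ℂ) ^ m *
          ∑ j, (α j - Complex.I / 4) ^ m *
            Complex.exp (Complex.I * ((inner ℝ (k - ℓ) (y j) : ℝ) : ℂ))
      = ((2 * Real.pi : ℂ) ^ 2)⁻¹ *
      ∑ j, ∑ j', (tc⁻¹ • P) j j' *
        (Complex.exp (Complex.I * ((inner ℝ k (y j') : ℝ) : ℂ)) *
         Complex.exp (-Complex.I * ((inner ℝ ℓ (y j) : ℝ) : ℂ))) := by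
    have hcol : ∀ j : Fin n, ∑ j', (tc⁻¹ • P) j j' *
        (Complex.exp (Complex.I * ((inner ℝ k (y j') : ℝ) : ℂ)) *
         Complex.exp (-Complex.I * ((inner ℝ ℓ (y j) : ℝ) : ℂ)))
        = ∑ m ∈ Finset.range (M + 1), tc⁻¹ * (-tc⁻¹) ^ m *
            ((α j - Complex.I / 4) ^ m *
              (Complex.exp (Complex.I * ((inner ℝ k (y j) : ℝ) : ℂ)) *
               Complex.exp (-Complex.I * ((inner ℝ ℓ (y j) : ℝ) : ℂ)))) := by
      intro j
      have hPapp : ∀ j' : Fin n, (tc⁻¹ • P) j j' = ∑ m ∈ Finset.range (M + 1),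
          tc⁻¹ * ((-tc⁻¹) ^ m *
            (if j = j' then (α j - Complex.I / 4) ^ m else 0)) := by
        intro j'
        simp only [hP, Matrix.smul_apply, Matrix.sum_apply, smul_eq_mul, hZd,
          Matrix.diagonal_pow, Matrix.diagonal_apply, Pi.pow_apply, hz, Finset.mul_sum]
      calc ∑ j', (tc⁻¹ • P) j j' *
            (Complex.exp (Complex.I * ((inner ℝ k (y j') : ℝ) : ℂ)) *
             Complex.exp (-Complex.I * ((inner ℝ ℓ (y j) : ℝ) : ℂ)))
          = ∑ j' : Fin n, ∑ m ∈ Finset.range (M + 1),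
              (tc⁻¹ * ((-tc⁻¹) ^ m *
                (if j = j' then (α j - Complex.I / 4) ^ m else 0))) *
              (Complex.exp (Complex.I * ((inner ℝ k (y j') : ℝ) : ℂ)) *
               Complex.exp (-Complex.I * ((inner ℝ ℓ (y j) : ℝ) : ℂ))) := by
            refine Finset.sum_congr rfl fun j' _ => ?_
            rw [hPapp j', Finset.sum_mul]
        _ = ∑ m ∈ Finset.range (M + 1), ∑ j' : Fin n,
              (tc⁻¹ * ((-tc⁻¹) ^ m *
                (if j = j' then (α j - Complex.I / 4) ^ m else 0))) *
              (Complex.exp (Complex.I * ((inner ℝ k (y j') : ℝ) : ℂ)) *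
               Complex.exp (-Complex.I * ((inner ℝ ℓ (y j) : ℝ) : ℂ))) := Finset.sum_comm
        _ = ∑ m ∈ Finset.range (M + 1), tc⁻¹ * (-tc⁻¹) ^ m *
              ((α j - Complex.I / 4) ^ m *
                (Complex.exp (Complex.I * ((inner ℝ k (y j) : ℝ) : ℂ)) *
                 Complex.exp (-Complex.I * ((inner ℝ ℓ (y j) : ℝ) : ℂ)))) := by
            refine Finset.sum_congr rfl fun m _ => ?_
            rw [Finset.sum_eq_single j]
            · rw [if_pos rfl]; ring
            · intro j' _ hj'
              rw [if_neg (Ne.symm hj')]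
              ring
            · intro h
              exact absurd (Finset.mem_univ j) h
    simp only [hexp, hcol]
    simp only [Finset.mul_sum]
    conv_rhs => rw [Finset.sum_comm]
    refine Finset.sum_congr rfl fun m _ => ?_
    refine Finset.sum_congr rfl fun j _ => ?_
    linear_combination ((α j - Complex.I / 4) ^ m *
      (Complex.exp (Complex.I * ((inner ℝ k (y j) : ℝ) : ℂ)) *
       Complex.exp (-Complex.I * ((inner ℝ ℓ (y j) : ℝ) : ℂ)))) * hcoef m
  have hsum : f2 n y α G κ k ℓ +
      (((2 * Real.pi * Real.log κ : ℝ) : ℂ))⁻¹ *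
      ∑ m ∈ Finset.range (M + 1),
        (-2 * Real.pi : ℂ) ^ m / (Real.log κ : ℂ) ^ m *
          ∑ j, (α j - Complex.I / 4) ^ m *
            Complex.exp (Complex.I * ((inner ℝ (k - ℓ) (y j) : ℝ) : ℂ))
      = -((2 * Real.pi : ℂ) ^ 2)⁻¹ *
      ∑ j, ∑ j', (B - tc⁻¹ • P) j j' *
        (Complex.exp (Complex.I * ((inner ℝ k (y j') : ℝ) : ℂ)) *
         Complex.exp (-Complex.I * ((inner ℝ ℓ (y j) : ℝ) : ℂ))) := by
    rw [hf2, hS]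
    simp only [Matrix.sub_apply, sub_mul, Finset.sum_sub_distrib]
    ring
  rw [hsum]
  have hnorm2π : ‖(2 * Real.pi : ℂ)‖ = 2 * Real.pi := by
    have h : (2 * (Real.pi : ℂ)) = ((2 * Real.pi : ℝ) : ℂ) := by push_cast; ring
    rw [h, Complex.norm_real, Real.norm_eq_abs, _root_.abs_of_pos (by positivity)]
  have hnormc : ‖(((2 * Real.pi : ℂ)) ^ 2)⁻¹‖ = ((2 * Real.pi) ^ 2)⁻¹ := by
    rw [norm_inv, norm_pow, hnorm2π]
  have hterm : ∀ (j j' : Fin n), ‖(B - tc⁻¹ • P) j j' *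
      (Complex.exp (Complex.I * ((inner ℝ k (y j') : ℝ) : ℂ)) *
       Complex.exp (-Complex.I * ((inner ℝ ℓ (y j) : ℝ) : ℂ)))‖ ≤ ‖B - tc⁻¹ • P‖ := by
    intro j j'
    rw [norm_mul, norm_mul, norm_exp_I_mul, norm_exp_neg_I_mul, mul_one, mul_one]
    exact entry_le _ j j'
  have hbig : ‖∑ j, ∑ j', (B - tc⁻¹ • P) j j' *
      (Complex.exp (Complex.I * ((inner ℝ k (y j') : ℝ) : ℂ)) *
       Complex.exp (-Complex.I * ((inner ℝ ℓ (y j) : ℝ) : ℂ)))‖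
      ≤ (n:ℝ)^2 * ‖B - tc⁻¹ • P‖ := by
    calc ‖∑ j, ∑ j', (B - tc⁻¹ • P) j j' *
        (Complex.exp (Complex.I * ((inner ℝ k (y j') : ℝ) : ℂ)) *
         Complex.exp (-Complex.I * ((inner ℝ ℓ (y j) : ℝ) : ℂ)))‖
        ≤ ∑ j : Fin n, ∑ j' : Fin n, ‖(B - tc⁻¹ • P) j j' *
          (Complex.exp (Complex.I * ((inner ℝ k (y j') : ℝ) : ℂ)) *
           Complex.exp (-Complex.I * ((inner ℝ ℓ (y j) : ℝ) : ℂ)))‖ :=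
          le_trans (norm_sum_le _ _) (Finset.sum_le_sum fun j _ => norm_sum_le _ _)
      _ ≤ ∑ _j : Fin n, ∑ _j' : Fin n, ‖B - tc⁻¹ • P‖ :=
          Finset.sum_le_sum fun j _ => Finset.sum_le_sum fun j' _ => hterm j j'
      _ = (n:ℝ)^2 * ‖B - tc⁻¹ • P‖ := by
          simp [Finset.sum_const, Finset.card_univ, nsmul_eq_mul]
          ring
  have hfrac : (1/t)^(M+2) = (2*Real.pi)^(M+2) / (Real.log κ)^(M+2) := by
    rw [ht, one_div, inv_div, div_pow]
  have hlogpow : (0:ℝ) < (Real.log κ)^(M+2) := pow_pos hlogpos _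
  calc ‖-((2 * Real.pi : ℂ) ^ 2)⁻¹ *
      ∑ j, ∑ j', (B - tc⁻¹ • P) j j' *
        (Complex.exp (Complex.I * ((inner ℝ k (y j') : ℝ) : ℂ)) *
         Complex.exp (-Complex.I * ((inner ℝ ℓ (y j) : ℝ) : ℂ)))‖
      = ((2 * Real.pi) ^ 2)⁻¹ * ‖∑ j, ∑ j', (B - tc⁻¹ • P) j j' *
        (Complex.exp (Complex.I * ((inner ℝ k (y j') : ℝ) : ℂ)) *
         Complex.exp (-Complex.I * ((inner ℝ ℓ (y j) : ℝ) : ℂ)))‖ := by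
        rw [norm_mul, norm_neg, hnormc]
    _ ≤ ((2 * Real.pi) ^ 2)⁻¹ * ((n:ℝ)^2 * (C₂ * (1/t)^(M+2))) := by
        refine mul_le_mul_of_nonneg_left ?_ (by positivity)
        refine le_trans hbig (mul_le_mul_of_nonneg_left hD (by positivity))
    _ = ((2 * Real.pi)^2)⁻¹ * (n:ℝ)^2 * C₂ * (2*Real.pi)^(M+2) / (Real.log κ)^(M+2) := by
        rw [hfrac]; ring
    _ ≤ C / (Real.log κ)^(M+2) := by
        rw [hC]
        refine div_le_div_of_nonneg_right ?_ hlogpow.le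
        linarith
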